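/- Let n be an even positive integer and m a positive integer. Then m² divides S_n(m) if and only if m divides the numerator of B_n, where S_n(m) = Σ_{ν=0}^{m-1} ν^n. -/

import Mathlib

open Finset

namespace SqDvdAux

/-- `x` is `p`-integral: some multiple of `x` by a `p`-unit integer is an integer. -/
def PI (p : ℕ) (x : ℚ) : Prop := ∃ a b : ℤ, ¬(p:ℤ) ∣ b ∧ x * b = a

variable {p : ℕ}

lemma not_dvd_one (hp : p.Prime) : ¬ (p:ℤ) ∣ 1 := fun h => by
  have h1 := Int.le_of_dvd one_pos h
  have h2 : (2:ℤ) ≤ p := by exact_mod_cast hp.two_le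
  omega

lemma PI_intdiv (hp : p.Prime) {a b : ℤ} (hb : ¬(p:ℤ) ∣ b) : PI p ((a:ℚ) / (b:ℚ)) := by
  have hb0 : b ≠ 0 := by rintro rfl; exact hb (dvd_zero _)
  exact ⟨a, b, hb, by field_simp⟩

lemma PI_int (hp : p.Prime) (a : ℤ) : PI p (a:ℚ) := ⟨a, 1, not_dvd_one hp, by simp⟩

lemma PI_zero (hp : p.Prime) : PI p 0 := by simpa using PI_int hp 0

lemma PI.add (hp : p.Prime) {x y : ℚ} : PI p x → PI p y → PI p (x + y) := by
  rintro ⟨a, b, hb, hab⟩ ⟨c, d, hd, hcd⟩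
  refine ⟨a * d + c * b, b * d, fun h => ?_, ?_⟩
  · rcases (Int.prime_iff_natAbs_prime.mpr (by simpa using hp)).dvd_mul.mp h with h' | h' <;> [exact hb h'; exact hd h']
  · push_cast
    rw [add_mul, show x * (b * d) = x * b * d by ring, hab,
      show y * (b * d) = y * d * b by ring, hcd]

lemma PI.mul (hp : p.Prime) {x y : ℚ} : PI p x → PI p y → PI p (x * y) := by
  rintro ⟨a, b, hb, hab⟩ ⟨c, d, hd, hcd⟩
  refine ⟨a * c, b * d, fun h => ?_, ?_⟩
  · rcases (Int.prime_iff_natAbs_prime.mpr (by simpa using hp)).dvd_mul.mp h with h' | h' <;> [exact hb h'; exact hd h']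
  · push_cast
    rw [show x * y * (b * d) = (x * b) * (y * d) by ring, hab, hcd]

lemma PI.neg {x : ℚ} : PI p x → PI p (-x) := by
  rintro ⟨a, b, hb, hab⟩
  exact ⟨-a, b, hb, by rw [neg_mul, hab]; push_cast; ring⟩

lemma PI.sub (hp : p.Prime) {x y : ℚ} (h1 : PI p x) (h2 : PI p y) : PI p (x - y) := by
  simpa [sub_eq_add_neg] using h1.add hp h2.neg

lemma PI_sum (hp : p.Prime) {α : Type*} {s : Finset α} {f : α → ℚ}
    (h : ∀ a ∈ s, PI p (f a)) : PI p (∑ a ∈ s, f a) :=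
  Finset.sum_induction f (PI p) (fun _ _ ha hb => ha.add hp hb) (PI_zero hp) h

/-- A `p`-unit cancels. -/
lemma PI.of_unit_mul (hp : p.Prime) {u : ℤ} (hu : ¬(p:ℤ) ∣ u) {x : ℚ} (h : PI p ((u:ℚ) * x)) :
    PI p x := by
  obtain ⟨a, b, hb, hab⟩ := h
  refine ⟨a, u * b, fun h' => ?_, by push_cast; rw [← hab]; ring⟩
  rcases (Int.prime_iff_natAbs_prime.mpr (by simpa using hp)).dvd_mul.mp h' with h' | h' <;> [exact hu h'; exact hb h']

/-- `p^k ∣ N` iff `N / p^k` is `p`-integral. -/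
lemma PI_div_pow_iff (hp : p.Prime) (N : ℤ) (k : ℕ) :
    PI p ((N:ℚ) / (p:ℚ) ^ k) ↔ (p:ℤ) ^ k ∣ N := by
  have hp0 : (p:ℚ) ≠ 0 := by exact_mod_cast hp.pos.ne'
  constructor
  · rintro ⟨a, b, hb, hab⟩
    have h1 : (N:ℚ) * b = (p:ℚ) ^ k * a := by
      field_simp at hab; linear_combination hab
    have h2 : N * b = (p:ℤ) ^ k * a := by exact_mod_cast h1
    have h3 : (p:ℤ) ^ k ∣ N * b := ⟨a, h2⟩
    have hcop : IsCoprime ((p:ℤ) ^ k) b :=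
      (((Int.prime_iff_natAbs_prime.mpr (by simpa using hp)).coprime_iff_not_dvd).mpr hb).pow_left
    exact hcop.dvd_of_dvd_mul_right h3
  · rintro ⟨c, rfl⟩
    refine ⟨c, 1, not_dvd_one hp, ?_⟩
    push_cast
    field_simp


lemma choose_key {n i : ℕ} (hi' : i ≤ n) :
    (n + 1) * n.choose i = (n + 1).choose i * (n + 1 - i) := by
  rw [show n + 1 - i = n - i + 1 by omega]
  have h1 := Nat.add_one_mul_choose_eq n (n - i)
  rw [Nat.choose_symm hi'] at h1
  have h2 : (n + 1).choose (n - i + 1) = (n + 1).choose i := by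
    rw [show n - i + 1 = n + 1 - i by omega, Nat.choose_symm (by omega)]
  rw [← h2]
  simpa using h1

/-- Faulhaber in the form `S_n(m) = ∑_{i<n} B_i C(n,i) m^{n+1-i}/(n+1-i) + B_n m`. -/
lemma faulhaber' (n m : ℕ) (hn : 0 < n) :
    (∑ k ∈ range m, (k:ℚ) ^ n) =
      (∑ i ∈ range n, bernoulli i * (n.choose i) * (m:ℚ) ^ (n + 1 - i) / ((n + 1 - i : ℕ) : ℚ))
        + bernoulli n * m := by
  have h := sum_range_pow m n
  rw [h, Finset.sum_range_succ]
  congr 1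
  · apply Finset.sum_congr rfl
    intro i hi
    have hi' : i ≤ n := (Finset.mem_range.mp hi).le
    have hq : ((n:ℚ) + 1) * (n.choose i : ℚ) = ((n + 1).choose i : ℚ) * ((n + 1 - i : ℕ) : ℚ) := by
      exact_mod_cast congrArg (Nat.cast : ℕ → ℚ) (choose_key hi')
    have hne1 : ((n:ℚ) + 1) ≠ 0 := by positivity
    have hne2 : ((n + 1 - i : ℕ) : ℚ) ≠ 0 := by
      have : 0 < n + 1 - i := by omega
      exact_mod_cast this.ne'
    rw [div_eq_div_iff hne1 hne2]
    linear_combination (-(bernoulli i * (m:ℚ) ^ (n + 1 - i))) * hq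
  · rw [show n + 1 - n = 1 by omega, Nat.choose_succ_self_right]
    have hne1 : ((n:ℚ) + 1) ≠ 0 := by positivity
    field_simp
    push_cast
    ring


lemma PI_B_term (hp : p.Prime) {i : ℕ} (hB : PI p ((p:ℚ) * bernoulli i))
    (c : ℕ) {j v w q : ℕ} (hj : j = p ^ v * w) (hw : ¬ p ∣ w) (hq : v + 1 ≤ q) :
    PI p (bernoulli i * (c:ℚ) * (p:ℚ) ^ q / (j:ℚ)) := by
  obtain ⟨d, rfl⟩ : ∃ d, q = v + 1 + d := ⟨q - (v+1), by omega⟩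
  have hw0 : w ≠ 0 := fun h => hw (h ▸ dvd_zero p)
  have hwq : (w:ℚ) ≠ 0 := by exact_mod_cast hw0
  have hpq : (p:ℚ) ≠ 0 := by exact_mod_cast hp.pos.ne'
  have key : bernoulli i * (c:ℚ) * (p:ℚ) ^ (v+1+d) / (j:ℚ)
      = ((p:ℚ) * bernoulli i) * (((c * p ^ d : ℕ) : ℚ) / ((w:ℕ) : ℚ)) := by
    subst hj; push_cast
    field_simp
    ring
  rw [key]
  have hwz : ¬ (p:ℤ) ∣ ((w:ℤ)) := by exact_mod_cast hw
  have h2 : PI p (((c * p ^ d : ℕ) : ℚ) / ((w:ℕ) : ℚ)) := by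
    have := PI_intdiv hp (a := (c * p ^ d : ℕ)) hwz
    simpa using this
  exact hB.mul hp h2

lemma PI_p_mul_bernoulli (hp : p.Prime) : ∀ i, PI p ((p:ℚ) * bernoulli i) := by
  intro i
  induction i using Nat.strong_induction_on with
  | _ i ih =>
    rcases Nat.eq_zero_or_pos i with rfl | h0
    · simpa using PI_int hp p
    have hF := faulhaber' i p h0
    have key : (p:ℚ) * bernoulli i
        = ((∑ k ∈ range p, (k:ℤ) ^ i : ℤ) : ℚ)
          - ∑ l ∈ range i, bernoulli l * (i.choose l) * (p:ℚ) ^ (i + 1 - l) / ((i + 1 - l : ℕ) : ℚ) := by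
      push_cast
      rw [hF]
      ring
    rw [key]
    refine (PI_int hp _).sub hp (PI_sum hp ?_)
    intro l hl
    have hl' : l < i := Finset.mem_range.mp hl
    have hj0 : i + 1 - l ≠ 0 := by omega
    have hjw : i + 1 - l = p ^ ((i + 1 - l).factorization p) * ((i + 1 - l) / p ^ ((i + 1 - l).factorization p)) :=
      (Nat.ordProj_mul_ordCompl_eq_self (i + 1 - l) p).symm
    have hw : ¬ p ∣ (i + 1 - l) / p ^ ((i + 1 - l).factorization p) :=
      Nat.not_dvd_ordCompl hp hj0
    have hq : (i + 1 - l).factorization p + 1 ≤ i + 1 - l := by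
      have h1 : p ^ ((i + 1 - l).factorization p) ≤ i + 1 - l :=
        Nat.le_of_dvd (by omega) (Nat.ordProj_dvd _ p)
      have h2 : (i + 1 - l).factorization p < p ^ ((i + 1 - l).factorization p) :=
        Nat.lt_pow_self hp.one_lt
      omega
    exact PI_B_term hp (ih l hl') (i.choose l) hjw hw hq

lemma bernoulli_odd_zero {k : ℕ} (h : Odd k) (h1 : 1 < k) : bernoulli k = 0 := by
  rw [bernoulli_eq_bernoulli'_of_ne_one (by omega)]; exact bernoulli'_eq_zero_of_odd h h1

lemma PI_special (hp : p.Prime) {m e u K : ℕ} (hm : m = p ^ e * u) (he : 1 ≤ e)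
    (hK : K ≤ 2 * e) (hK2 : p = 2 → K < 2 * e) :
    PI p (-((m:ℚ) ^ 2 / 2) / (p:ℚ) ^ K) := by
  by_cases hp2 : p = 2
  · subst hp2
    obtain ⟨d, hd⟩ : ∃ d, 2 * e = K + 1 + d := ⟨2 * e - (K + 1), by omega⟩
    have key : -((m:ℚ) ^ 2 / 2) / (2:ℕ) ^ K = -(((2 ^ d * u ^ 2 : ℕ) : ℚ)) := by
      rw [hm]; push_cast
      rw [mul_pow, ← pow_mul, show e * 2 = K + 1 + d by omega]
      rw [pow_add, pow_add]
      field_simp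
    rw [key]
    exact (PI_int hp _).neg
  · obtain ⟨d, hd⟩ : ∃ d, 2 * e = K + d := ⟨2 * e - K, by omega⟩
    have h2 : ¬ (p:ℤ) ∣ ((2:ℕ) : ℤ) := by
      rw [Int.natCast_dvd_natCast]
      intro h
      exact hp2 ((Nat.prime_dvd_prime_iff_eq hp Nat.prime_two).mp h)
    have key : -((m:ℚ) ^ 2 / 2) / (p:ℚ) ^ K = -((((p ^ d * u ^ 2 : ℕ)) : ℚ) / ((2:ℕ) : ℚ)) := by
      have hpq : (p:ℚ) ≠ 0 := by exact_mod_cast hp.pos.ne'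
      rw [hm]; push_cast
      rw [mul_pow, ← pow_mul, show e * 2 = K + d by omega, pow_add]
      field_simp
    rw [key]
    exact (PI_intdiv hp h2).neg

lemma PI_tail (hp : p.Prime) {n : ℕ} (hn : Even n) (hn2 : 2 ≤ n) {m e u K : ℕ}
    (hm : m = p ^ e * u) (hu : ¬ p ∣ u) (he : 1 ≤ e) (hK : K ≤ 2 * e) (hK2 : p = 2 → K < 2 * e)
    (hJ : ∀ j v : ℕ, 3 ≤ j → p ^ v ∣ j → v + K + 1 ≤ j * e) :
    PI p ((∑ i ∈ range n, bernoulli i * (n.choose i) * (m:ℚ) ^ (n + 1 - i) / ((n + 1 - i : ℕ) : ℚ))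
      / (p:ℚ) ^ K) := by
  rw [Finset.sum_div]
  apply PI_sum hp
  intro i hi
  have hi' : i < n := Finset.mem_range.mp hi
  by_cases hin : i = n - 1
  · subst hin
    by_cases hn2' : n = 2
    · subst hn2'
      have key : bernoulli (2 - 1) * ((2:ℕ).choose (2 - 1) : ℚ) * (m:ℚ) ^ (2 + 1 - (2 - 1))
            / ((2 + 1 - (2 - 1) : ℕ) : ℚ) / (p:ℚ) ^ K = -((m:ℚ) ^ 2 / 2) / (p:ℚ) ^ K := by
        norm_num [bernoulli_one]
        ring
      rw [key]
      exact PI_special hp hm he hK hK2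
    · have hodd : Odd (n - 1) := by
        rcases hn with ⟨k, hk⟩
        exact ⟨k - 1, by omega⟩
      rw [bernoulli_odd_zero hodd (by omega)]
      simpa using PI_zero hp
  · have hj3 : 3 ≤ n + 1 - i := by omega
    set j := n + 1 - i with hjdef
    have hj0 : j ≠ 0 := by omega
    have hjw : j = p ^ (j.factorization p) * (j / p ^ (j.factorization p)) :=
      (Nat.ordProj_mul_ordCompl_eq_self j p).symm
    have hw : ¬ p ∣ j / p ^ (j.factorization p) := Nat.not_dvd_ordCompl hp hj0
    have hq := hJ j (j.factorization p) hj3 (Nat.ordProj_dvd _ p)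
    have hq' : j.factorization p + K + 1 ≤ e * j := by rw [mul_comm e j]; exact hq
    obtain ⟨d, hd⟩ : ∃ d, e * j = K + d := ⟨e * j - K, by omega⟩
    have hjq : (j:ℚ) ≠ 0 := by exact_mod_cast hj0
    have hpq : (p:ℚ) ≠ 0 := by exact_mod_cast hp.pos.ne'
    have key : bernoulli i * (n.choose i : ℚ) * (m:ℚ) ^ j / (j:ℚ) / (p:ℚ) ^ K
        = bernoulli i * ((n.choose i * u ^ j : ℕ) : ℚ) * (p:ℚ) ^ d / (j:ℚ) := by
      rw [hm]; push_cast
      rw [mul_pow, ← pow_mul, hd, pow_add]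
      field_simp
    rw [key]
    exact PI_B_term hp (PI_p_mul_bernoulli hp i) _ hjw hw (show j.factorization p + 1 ≤ d by omega)

lemma two_pow_ge {v : ℕ} (h : 2 ≤ v) : v + 2 ≤ 2 ^ v := by
  induction v with
  | zero => omega
  | succ k ih =>
    rcases Nat.lt_or_ge k 2 with hk | hk
    · interval_cases k
      · omega
      · norm_num
    · have := ih hk
      have h2 : 2 ^ k ≤ 2 ^ (k+1) := Nat.pow_le_pow_right (by norm_num) (by omega)
      have h3 : 2 ^ (k+1) = 2 * 2 ^ k := by ring
      omega

lemma five_pow_ge {v : ℕ} (h : 1 ≤ v) : v + 3 ≤ 5 ^ v := by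
  induction v with
  | zero => omega
  | succ k ih =>
    rcases Nat.eq_zero_or_pos k with rfl | hk
    · norm_num
    · have := ih hk
      have h3 : 5 ^ (k+1) = 5 * 5 ^ k := by ring
      omega

lemma hJ_small (hp : p.Prime) {j v : ℕ} (h3 : 3 ≤ j) (hdvd : p ^ v ∣ j) : v + 2 ≤ j := by
  have hpv : p ^ v ≤ j := Nat.le_of_dvd (by omega) hdvd
  have h2v : 2 ^ v ≤ p ^ v := Nat.pow_le_pow_left hp.two_le v
  rcases Nat.lt_or_ge v 2 with hv | hv
  · omega
  · have := two_pow_ge hv; omega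

lemma hJ_large (hp5 : 5 ≤ p) {j v : ℕ} (h3 : 3 ≤ j) (hdvd : p ^ v ∣ j) : v + 3 ≤ j := by
  have hpv : p ^ v ≤ j := Nat.le_of_dvd (by omega) hdvd
  have h2v : 5 ^ v ≤ p ^ v := Nat.pow_le_pow_left hp5 v
  rcases Nat.eq_zero_or_pos v with rfl | hv
  · omega
  · have := five_pow_ge hv; omega

lemma prime23 (hp23 : p = 2 ∨ p = 3) : p.Prime := by
  rcases hp23 with rfl | rfl
  exacts [Nat.prime_two, Nat.prime_three]

lemma S_p_not_dvd (hp23 : p = 2 ∨ p = 3) {n : ℕ} (hn : Even n) (hn0 : 0 < n) :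
    ¬ (p:ℤ) ∣ (∑ k ∈ range p, (k:ℤ) ^ n) := by
  rcases hp23 with rfl | rfl
  · have h : (∑ k ∈ range 2, (k:ℤ) ^ n) = 1 := by
      rw [Finset.sum_range_succ, Finset.sum_range_one]
      simp [zero_pow hn0.ne']
    rw [h]
    exact not_dvd_one Nat.prime_two
  · have h : (∑ k ∈ range 3, (k:ℤ) ^ n) = 1 + 2 ^ n := by
      rw [Finset.sum_range_succ, Finset.sum_range_succ, Finset.sum_range_one]
      simp [zero_pow hn0.ne']
    rw [h]
    intro hdvd
    have h3 : ((1 + 2 ^ n : ℤ) : ZMod 3) = 0 := by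
      exact_mod_cast (ZMod.intCast_zmod_eq_zero_iff_dvd _ 3).mpr hdvd
    push_cast at h3
    rw [show (2 : ZMod 3) = -1 by decide, hn.neg_one_pow] at h3
    revert h3
    decide

lemma not_PI_bernoulli (hp23 : p = 2 ∨ p = 3) {n : ℕ} (hn : Even n) (hn0 : 0 < n) :
    ¬ PI p (bernoulli n) := by
  have hp := prime23 hp23
  have hn2 : 2 ≤ n := by rcases hn with ⟨k, hk⟩; omega
  have hF := faulhaber' n p hn0
  have hu : ¬ p ∣ 1 := by simpa using hp.one_lt.ne'
  have htail : PI p ((∑ i ∈ range n, bernoulli i * (n.choose i) * (p:ℚ) ^ (n + 1 - i)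
        / ((n + 1 - i : ℕ) : ℚ)) / (p:ℚ) ^ 1) := by
    refine PI_tail hp hn hn2 (e := 1) (u := 1) (by ring) hu le_rfl (by omega) (fun _ => by omega) ?_
    intro j v h3 hdvd
    have := hJ_small hp h3 hdvd
    omega
  rintro ⟨a, b, hb, hab⟩
  obtain ⟨c, cd, hcd, h2⟩ := htail
  have hpq : (p:ℚ) ≠ 0 := by exact_mod_cast hp.pos.ne'
  have h2' : (∑ i ∈ range n, bernoulli i * (n.choose i) * (p:ℚ) ^ (n + 1 - i)
      / ((n + 1 - i : ℕ) : ℚ)) * cd = (p:ℚ) * c := by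
    field_simp at h2
    linear_combination h2
  have hSQ : ((∑ k ∈ range p, (k:ℤ) ^ n : ℤ) : ℚ) = ∑ k ∈ range p, (k:ℚ) ^ n := by push_cast; rfl
  have key : ((∑ k ∈ range p, (k:ℤ) ^ n : ℤ) : ℚ) * (b * cd) = (p:ℚ) * (c * b + a * cd) := by
    rw [hSQ, hF]
    have e1 : bernoulli n * b = a := hab
    linear_combination cd * (p:ℚ) * hab + b * h2'
  have keyZ : (∑ k ∈ range p, (k:ℤ) ^ n) * (b * cd) = (p:ℤ) * (c * b + a * cd) := by
    exact_mod_cast key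
  have hdvd : (p:ℤ) ∣ (∑ k ∈ range p, (k:ℤ) ^ n) * (b * cd) := ⟨_, keyZ⟩
  have hP : Prime (p:ℤ) := Int.prime_iff_natAbs_prime.mpr (by simpa using hp)
  rcases hP.dvd_mul.mp hdvd with h | h
  · exact S_p_not_dvd hp23 hn hn0 h
  · rcases hP.dvd_mul.mp h with h | h <;> [exact hb h; exact hcd h]

/-- For `e ≥ 1`: `x/p^e` is `p`-integral iff `p^e` divides the numerator of `x`. -/
lemma PI_rat_div_pow_iff (hp : p.Prime) (x : ℚ) {e : ℕ} (he : 1 ≤ e) :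
    PI p (x / (p:ℚ) ^ e) ↔ (p:ℤ) ^ e ∣ x.num := by
  have hpq : (p:ℚ) ≠ 0 := by exact_mod_cast hp.pos.ne'
  have hden : (x.den : ℚ) ≠ 0 := by exact_mod_cast x.den_ne_zero
  constructor
  · rintro ⟨a, b, hb, hab⟩
    have h1 : x * b = (p:ℚ) ^ e * a := by
      field_simp at hab
      linear_combination hab
    have h2 : (x.num : ℚ) * b = (p:ℚ) ^ e * a * x.den := by
      rw [← Rat.mul_den_eq_num]
      linear_combination (x.den : ℚ) * h1
    have h3 : x.num * b = (p:ℤ) ^ e * a * x.den := by exact_mod_cast h2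
    have h4 : (p:ℤ) ^ e ∣ x.num * b := ⟨a * x.den, by linarith [h3]⟩
    have hcop : IsCoprime ((p:ℤ) ^ e) b :=
      ((Int.prime_iff_natAbs_prime.mpr (by simpa using hp)).coprime_iff_not_dvd.mpr hb).pow_left
    exact hcop.dvd_of_dvd_mul_right h4
  · rintro ⟨c, hc⟩
    have hpnum : (p:ℤ) ∣ x.num := hc ▸ dvd_mul_of_dvd_left (dvd_pow_self _ (by omega)) c
    have hpden : ¬ (p:ℤ) ∣ (x.den : ℤ) := by
      intro h
      have h1 : p ∣ x.num.natAbs := by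
        have := Int.natAbs_dvd_natAbs.mpr hpnum
        simpa using this
      have h2 : p ∣ x.den := by exact_mod_cast h
      have h3 : p ∣ Nat.gcd x.num.natAbs x.den := Nat.dvd_gcd h1 h2
      rw [x.reduced] at h3
      exact hp.one_lt.ne' (Nat.eq_one_of_dvd_one h3)
    refine ⟨c, (x.den : ℤ), hpden, ?_⟩
    have hx : x * ((x.den : ℤ) : ℚ) = (((p:ℤ) ^ e * c : ℤ) : ℚ) := by
      rw [show ((x.den : ℤ) : ℚ) = (x.den : ℚ) by push_cast; ring, Rat.mul_den_eq_num, hc]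
    calc x / (p:ℚ) ^ e * ((x.den : ℤ) : ℚ) = x * ((x.den:ℤ):ℚ) / (p:ℚ)^e := by ring
    _ = ((p:ℤ) ^ e * c : ℤ) / (p:ℚ)^e := by rw [hx]
    _ = c := by push_cast; field_simp

lemma PI_iff_of_eq_add {x y z : ℚ} (hp : p.Prime) (h : x = y + z) (hz : PI p z) :
    PI p x ↔ PI p y := by
  constructor
  · intro hx
    have : y = x - z := by rw [h]; ring
    rw [this]; exact hx.sub hp hz
  · intro hy
    rw [h]; exact hy.add hp hz

lemma main_23 (hp23 : p = 2 ∨ p = 3) {n m : ℕ} (hn : Even n) (hn0 : 0 < n)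
    (hm0 : m ≠ 0) (hpm : p ∣ m) :
    ¬ ((p:ℤ) ^ (m.factorization p) ∣ (∑ ν ∈ range m, (ν:ℤ) ^ n)) := by
  have hp := prime23 hp23
  have hn2 : 2 ≤ n := by rcases hn with ⟨k, hk⟩; omega
  set e := m.factorization p with hedef
  have he : 1 ≤ e := hp.factorization_pos_of_dvd hm0 hpm
  have hm : m = p ^ e * (m / p ^ e) := (Nat.ordProj_mul_ordCompl_eq_self m p).symm
  have hu : ¬ p ∣ m / p ^ e := Nat.not_dvd_ordCompl hp hm0
  have hpq : (p:ℚ) ≠ 0 := by exact_mod_cast hp.pos.ne'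
  intro hdvd
  have hSQ : ((∑ ν ∈ range m, (ν:ℤ) ^ n : ℤ) : ℚ) = ∑ ν ∈ range m, (ν:ℚ) ^ n := by
    push_cast; rfl
  have h1 : PI p (((∑ ν ∈ range m, (ν:ℤ) ^ n : ℤ) : ℚ) / (p:ℚ) ^ e) :=
    (PI_div_pow_iff hp _ e).mpr hdvd
  have htail : PI p ((∑ i ∈ range n, bernoulli i * (n.choose i) * (m:ℚ) ^ (n + 1 - i)
      / ((n + 1 - i : ℕ) : ℚ)) / (p:ℚ) ^ e) := by
    refine PI_tail hp hn hn2 hm hu he (by omega) (fun _ => by omega) ?_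
    intro j v h3 hdvd'
    have hj := hJ_small hp h3 hdvd'
    have h4 : v * e + 2 * e ≤ j * e := by
      have := Nat.mul_le_mul_right e hj
      rwa [add_mul] at this
    have h5 : v ≤ v * e := Nat.le_mul_of_pos_right v (by omega)
    omega
  have hmain : PI p (((m / p ^ e : ℕ) : ℚ) * bernoulli n) := by
    have key : ((m / p ^ e : ℕ) : ℚ) * bernoulli n
        = ((∑ ν ∈ range m, (ν:ℤ) ^ n : ℤ) : ℚ) / (p:ℚ) ^ e
          - (∑ i ∈ range n, bernoulli i * (n.choose i) * (m:ℚ) ^ (n + 1 - i)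
            / ((n + 1 - i : ℕ) : ℚ)) / (p:ℚ) ^ e := by
      rw [hSQ, faulhaber' n m hn0]
      have hmq : (m:ℚ) = (p:ℚ) ^ e * ((m / p ^ e : ℕ) : ℚ) := by
        exact_mod_cast congrArg (Nat.cast : ℕ → ℚ) hm
      rw [hmq]
      field_simp
      ring
    rw [key]
    exact h1.sub hp htail
  have hmain' : PI p ((((m / p ^ e : ℕ) : ℤ) : ℚ) * bernoulli n) := by
    rw [Int.cast_natCast]; exact hmain
  have hcontra : PI p (bernoulli n) := by
    refine PI.of_unit_mul hp ?_ hmain'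
    exact_mod_cast hu
  exact not_PI_bernoulli hp23 hn hn0 hcontra

lemma main_ge5 (hp : p.Prime) (hp5 : 5 ≤ p) {n m : ℕ} (hn : Even n) (hn0 : 0 < n)
    (hm0 : m ≠ 0) (hpm : p ∣ m) :
    ((p:ℤ) ^ (2 * m.factorization p) ∣ (∑ ν ∈ range m, (ν:ℤ) ^ n)) ↔
      (p:ℤ) ^ (m.factorization p) ∣ (bernoulli n).num := by
  have hn2 : 2 ≤ n := by rcases hn with ⟨k, hk⟩; omega
  set e := m.factorization p with hedef
  have he : 1 ≤ e := hp.factorization_pos_of_dvd hm0 hpm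
  have hm : m = p ^ e * (m / p ^ e) := (Nat.ordProj_mul_ordCompl_eq_self m p).symm
  have hu : ¬ p ∣ m / p ^ e := Nat.not_dvd_ordCompl hp hm0
  have hpq : (p:ℚ) ≠ 0 := by exact_mod_cast hp.pos.ne'
  have hSQ : ((∑ ν ∈ range m, (ν:ℤ) ^ n : ℤ) : ℚ) = ∑ ν ∈ range m, (ν:ℚ) ^ n := by
    push_cast; rfl
  have htail : PI p ((∑ i ∈ range n, bernoulli i * (n.choose i) * (m:ℚ) ^ (n + 1 - i)
      / ((n + 1 - i : ℕ) : ℚ)) / (p:ℚ) ^ (2 * e)) := by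
    refine PI_tail hp hn hn2 hm hu he le_rfl (fun h => by omega) ?_
    intro j v h3 hdvd'
    have hj := hJ_large hp5 h3 hdvd'
    have h4 : v * e + 3 * e ≤ j * e := by
      have := Nat.mul_le_mul_right e hj
      rwa [add_mul] at this
    have h5 : v ≤ v * e := Nat.le_mul_of_pos_right v (by omega)
    omega
  have heq : ((∑ ν ∈ range m, (ν:ℤ) ^ n : ℤ) : ℚ) / (p:ℚ) ^ (2 * e)
      = ((m / p ^ e : ℕ) : ℚ) * (bernoulli n / (p:ℚ) ^ e)
        + (∑ i ∈ range n, bernoulli i * (n.choose i) * (m:ℚ) ^ (n + 1 - i)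
          / ((n + 1 - i : ℕ) : ℚ)) / (p:ℚ) ^ (2 * e) := by
    rw [hSQ, faulhaber' n m hn0]
    have hmq : (m:ℚ) = (p:ℚ) ^ e * ((m / p ^ e : ℕ) : ℚ) := by
      exact_mod_cast congrArg (Nat.cast : ℕ → ℚ) hm
    rw [hmq, two_mul, pow_add]
    field_simp
    ring
  have step1 : ((p:ℤ) ^ (2 * e) ∣ (∑ ν ∈ range m, (ν:ℤ) ^ n)) ↔
      PI p (((m / p ^ e : ℕ) : ℚ) * (bernoulli n / (p:ℚ) ^ e)) := by
    rw [← PI_div_pow_iff hp _ (2 * e)]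
    exact PI_iff_of_eq_add hp heq htail
  have step2 : PI p (((m / p ^ e : ℕ) : ℚ) * (bernoulli n / (p:ℚ) ^ e)) ↔
      PI p (bernoulli n / (p:ℚ) ^ e) := by
    constructor
    · intro h
      refine PI.of_unit_mul hp (u := ((m / p ^ e : ℕ) : ℤ)) (by exact_mod_cast hu) ?_
      rw [Int.cast_natCast]; exact h
    · intro h
      have hint : PI p (((m / p ^ e : ℕ) : ℚ)) := by
        have := PI_int hp ((m / p ^ e : ℕ) : ℤ)
        rwa [Int.cast_natCast] at this
      exact hint.mul hp h
  rw [step1, step2, PI_rat_div_pow_iff hp _ he]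

lemma prod_fact_dvd_of_forall_dvd (m t : ℕ) (hm0 : m ≠ 0) (N : ℤ)
    (h : ∀ p ∈ m.primeFactors, ((p:ℤ) ^ (t * m.factorization p)) ∣ N) : (m:ℤ) ^ t ∣ N := by
  have h1 : m = ∏ p ∈ m.primeFactors, p ^ m.factorization p := by
    conv_lhs => rw [← Nat.factorization_prod_pow_eq_self hm0]
    rw [Nat.prod_factorization_eq_prod_primeFactors]
  have h2 : (m:ℤ) ^ t = ∏ p ∈ m.primeFactors, ((p:ℤ) ^ (t * m.factorization p)) := by
    conv_lhs => rw [h1]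
    push_cast
    rw [← Finset.prod_pow]
    refine Finset.prod_congr rfl fun p _ => ?_
    rw [← pow_mul, mul_comm]
  rw [h2]
  refine Finset.prod_dvd_of_coprime ?_ h
  intro a ha b hb hab
  have hpa := Nat.prime_of_mem_primeFactors (Finset.mem_coe.mp ha)
  have hpb := Nat.prime_of_mem_primeFactors (Finset.mem_coe.mp hb)
  exact (Nat.isCoprime_iff_coprime.mpr ((Nat.coprime_primes hpa hpb).mpr hab)).pow

end SqDvdAux

/-- `m² ∣ S_n(m) ↔ m ∣ numerator(B_n)` for even positive `n`. -/
theorem sq_dvd_power_sum_iff (n m : ℕ) (hn : 0 < n) (hne : Even n) (hm : 0 < m) :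
    (m : ℤ) ^ 2 ∣ (∑ ν ∈ Finset.range m, (ν : ℤ) ^ n) ↔ (m : ℤ) ∣ (bernoulli n).num := by
  have hm0 : m ≠ 0 := hm.ne'
  constructor
  · intro hdvd
    have key : ∀ p ∈ m.primeFactors, ((p:ℤ) ^ (1 * m.factorization p)) ∣ (bernoulli n).num := by
      intro p hpf
      have hp : p.Prime := Nat.prime_of_mem_primeFactors hpf
      have hpm : p ∣ m := Nat.dvd_of_mem_primeFactors hpf
      have hpe : ((p:ℤ) ^ (m.factorization p)) ∣ (m:ℤ) := by
        exact_mod_cast Int.natCast_dvd_natCast.mpr (Nat.ordProj_dvd m p)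
      have hp23 : ¬ (p = 2 ∨ p = 3) := by
        intro hp23
        refine SqDvdAux.main_23 hp23 hne hn hm0 hpm ?_
        exact hpe.trans ((dvd_pow_self (m:ℤ) two_ne_zero).trans hdvd)
      have hp5 : 5 ≤ p := by
        have h2 := hp.two_le
        have h4 : p ≠ 4 := by rintro rfl; norm_num at hp
        push_neg at hp23
        omega
      rw [one_mul]
      refine (SqDvdAux.main_ge5 hp hp5 hne hn hm0 hpm).mp ?_
      have : ((p:ℤ) ^ (m.factorization p)) ^ 2 ∣ (m:ℤ) ^ 2 := pow_dvd_pow_of_dvd hpe 2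
      rw [← pow_mul, mul_comm] at this
      exact this.trans hdvd
    have := SqDvdAux.prod_fact_dvd_of_forall_dvd m 1 hm0 _ key
    simpa using this
  · intro hdvd
    have key : ∀ p ∈ m.primeFactors, ((p:ℤ) ^ (2 * m.factorization p)) ∣
        (∑ ν ∈ Finset.range m, (ν : ℤ) ^ n) := by
      intro p hpf
      have hp : p.Prime := Nat.prime_of_mem_primeFactors hpf
      have hpm : p ∣ m := Nat.dvd_of_mem_primeFactors hpf
      have hpe : ((p:ℤ) ^ (m.factorization p)) ∣ (m:ℤ) := by
        exact_mod_cast Int.natCast_dvd_natCast.mpr (Nat.ordProj_dvd m p)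
      have hpnum : (p:ℤ) ∣ (bernoulli n).num := by
        have h1 : (p:ℤ) ∣ (m:ℤ) := by exact_mod_cast Int.natCast_dvd_natCast.mpr hpm
        exact h1.trans hdvd
      have hp23 : ¬ (p = 2 ∨ p = 3) := by
        intro hp23
        have hprime := SqDvdAux.prime23 hp23
        have hpden : ¬ (p:ℤ) ∣ ((bernoulli n).den : ℤ) := by
          intro h
          have h1 : p ∣ (bernoulli n).num.natAbs := by
            have := Int.natAbs_dvd_natAbs.mpr hpnum
            simpa using this
          have h2 : p ∣ (bernoulli n).den := by exact_mod_cast h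
          have h3 : p ∣ Nat.gcd (bernoulli n).num.natAbs (bernoulli n).den :=
            Nat.dvd_gcd h1 h2
          rw [(bernoulli n).reduced] at h3
          exact hprime.one_lt.ne' (Nat.eq_one_of_dvd_one h3)
        exact SqDvdAux.not_PI_bernoulli hp23 hne hn
          ⟨(bernoulli n).num, (bernoulli n).den, hpden, by
            push_cast
            exact Rat.mul_den_eq_num _⟩
      have hp5 : 5 ≤ p := by
        have h2 := hp.two_le
        have h4 : p ≠ 4 := by rintro rfl; norm_num at hp
        push_neg at hp23
        omega
      refine (SqDvdAux.main_ge5 hp hp5 hne hn hm0 hpm).mpr ?_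
      exact hpe.trans hdvd
    exact SqDvdAux.prod_fact_dvd_of_forall_dvd m 2 hm0 _ key
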